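/- Let W be a square-integrable random variable on a probability space with filtration (ℱₙ), and set μⁿ = E[W | ℱₙ] and vⁿ = E[(W − μⁿ)² | ℱₙ] (the conditional variance). If E[vⁿ] → 0 as n → ∞, then E[(W·W') | ℱₙ] − μⁿ · E[W' | ℱₙ] → 0 in L¹ for any bounded ℱ_∞-measurable W' and, in particular, E[W² | ℱₙ] − (μⁿ)² → 0 in L¹. -/

import Mathlib

open MeasureTheory Filter

lemma aux_int_mul {Ω : Type*} {m0 : MeasurableSpace Ω} {μ : Measure Ω} {a b : Ω → ℝ}
    (ha : MemLp a 2 μ) (hb : MemLp b 2 μ) : Integrable (fun ω => a ω * b ω) μ := by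
  have h : Integrable (fun ω => ((a + b) ω ^ 2 - a ω ^ 2 - b ω ^ 2) / 2) μ :=
    (((ha.add hb).integrable_sq.sub ha.integrable_sq).sub hb.integrable_sq).div_const 2
  refine h.congr (Filter.Eventually.of_forall fun ω => ?_)
  simp only [Pi.add_apply]; ring

lemma aux_memℒp_condexp {Ω : Type*} {m m0 : MeasurableSpace Ω} (hm : m ≤ m0) {μ : Measure Ω}
    [IsProbabilityMeasure μ] {W : Ω → ℝ} (hW : MemLp W 2 μ) : MemLp (μ[W|m]) 2 μ := by
  have h : ((condExpL2 ℝ ℝ hm (hW.toLp W) : Lp ℝ 2 μ) : Ω → ℝ) =ᵐ[μ] μ[W|m] := by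
    refine ae_eq_condExp_of_forall_setIntegral_eq hm (hW.integrable one_le_two)
      (fun s _ _ => (integrable_condExpL2_of_isFiniteMeasure hm).integrableOn)
      (fun s hs hμs => ?_) (aestronglyMeasurable_condExpL2 hm _)
    rw [integral_condExpL2_eq hm (hW.toLp W) hs hμs.ne]
    exact integral_congr_ae (ae_restrict_of_ae hW.coeFn_toLp)
  exact (Lp.memLp _).ae_eq h

/-- If the posterior (conditional) variance of `W` vanishes in expectation,
then conditional second moments factorize in the limit:
`E[W W' | ℱₙ] − E[W|ℱₙ]·E[W'|ℱₙ] → 0` in L¹ for bounded `ℱ_∞`-measurable `W'`,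
and in particular `E[W²|ℱₙ] − (E[W|ℱₙ])² → 0` in L¹. -/
theorem stmt5 {Ω : Type*} {m0 : MeasurableSpace Ω} {μ : Measure Ω} [IsProbabilityMeasure μ]
    (ℱ : Filtration ℕ m0) (W : Ω → ℝ) (hW : MemLp W 2 μ)
    (hv : Tendsto
      (fun n => ∫ ω, (μ[(fun ω' => (W ω' - (μ[W | ℱ n]) ω') ^ 2) | ℱ n]) ω ∂μ)
      atTop (nhds 0)) :
    (∀ W' : Ω → ℝ, Measurable[⨆ n, ℱ n] W' → (∃ C, ∀ ω, |W' ω| ≤ C) →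
      Tendsto
        (fun n => ∫ ω, |(μ[(fun ω' => W ω' * W' ω') | ℱ n]) ω
          - (μ[W | ℱ n]) ω * (μ[W' | ℱ n]) ω| ∂μ) atTop (nhds 0)) ∧
    Tendsto
      (fun n => ∫ ω, |(μ[(fun ω' => (W ω') ^ 2) | ℱ n]) ω - ((μ[W | ℱ n]) ω) ^ 2| ∂μ)
      atTop (nhds 0) := by
  have hWint : Integrable W μ := hW.integrable one_le_two
  have hFm : ∀ n, MemLp (μ[W | ℱ n]) 2 μ := fun n => aux_memℒp_condexp (ℱ.le n) hW
  have hGm : ∀ n, MemLp (fun ω => W ω - (μ[W | ℱ n]) ω) 2 μ := fun n => hW.sub (hFm n)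
  have hGsq : ∀ n, Integrable (fun ω => (W ω - (μ[W | ℱ n]) ω) ^ 2) μ :=
    fun n => (hGm n).integrable_sq
  -- rewrite hv as convergence of second moments of the residuals
  have hv' : Tendsto (fun n => ∫ ω, (W ω - (μ[W | ℱ n]) ω) ^ 2 ∂μ) atTop (nhds 0) :=
    hv.congr fun n => integral_condExp (ℱ.le n)
  -- L¹ convergence of residuals
  have hg1 : Tendsto (fun n => ∫ ω, |W ω - (μ[W | ℱ n]) ω| ∂μ) atTop (nhds 0) := by
    have hnn : ∀ n, 0 ≤ ∫ ω, |W ω - (μ[W | ℱ n]) ω| ∂μ :=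
      fun n => integral_nonneg fun ω => abs_nonneg _
    rw [tendsto_order]
    constructor
    · intro b hb
      exact Eventually.of_forall fun n => lt_of_lt_of_le hb (hnn n)
    · intro b hb
      have h2 : ∀ᶠ n in atTop, ∫ ω, (W ω - (μ[W | ℱ n]) ω) ^ 2 ∂μ < (b/2) * (b/2) :=
        hv'.eventually (gt_mem_nhds (by positivity))
      filter_upwards [h2] with n hn
      have habs : Integrable (fun ω => |W ω - (μ[W | ℱ n]) ω|) μ :=
        (hWint.sub integrable_condExp).abs
      have key : ∀ y : ℝ, |y| ≤ b/2 + (2/b) * y ^ 2 := by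
        intro y
        rw [← mul_le_mul_iff_right₀ hb]
        have he : b * (b/2 + 2/b * y ^ 2) = b * (b/2) + 2 * y ^ 2 := by
          field_simp
        rw [he]
        nlinarith [sq_nonneg (b/2 - |y|), sq_abs y, abs_nonneg y, sq_nonneg b]
      have hbound : ∀ ω, |W ω - (μ[W | ℱ n]) ω| ≤ b/2 + (2/b) * (W ω - (μ[W | ℱ n]) ω) ^ 2 :=
        fun ω => key _
      have hle : ∫ ω, |W ω - (μ[W | ℱ n]) ω| ∂μ
          ≤ b/2 + (2/b) * ∫ ω, (W ω - (μ[W | ℱ n]) ω) ^ 2 ∂μ := by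
        calc ∫ ω, |W ω - (μ[W | ℱ n]) ω| ∂μ
            ≤ ∫ ω, (b/2 + (2/b) * (W ω - (μ[W | ℱ n]) ω) ^ 2) ∂μ :=
              integral_mono habs ((integrable_const _).add ((hGsq n).const_mul _)) hbound
          _ = b/2 + (2/b) * ∫ ω, (W ω - (μ[W | ℱ n]) ω) ^ 2 ∂μ := by
              rw [integral_add (integrable_const _) ((hGsq n).const_mul _),
                integral_const, integral_const_mul]
              simp
      have h3 : (2/b) * ∫ ω, (W ω - (μ[W | ℱ n]) ω) ^ 2 ∂μ < (2/b) * ((b/2) * (b/2)) :=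
        mul_lt_mul_of_pos_left hn (by positivity)
      have h4 : (2/b) * ((b/2) * (b/2)) = b/2 := by field_simp
      linarith
  constructor
  · -- first part
    rintro W' hM ⟨C, hC⟩
    have hC' : ∀ ω, ‖W' ω‖ ≤ |C| := fun ω => (hC ω).trans (le_abs_self C)
    have hW'meas : AEStronglyMeasurable W' μ :=
      ((hM.mono (iSup_le ℱ.le) le_rfl).stronglyMeasurable).aestronglyMeasurable
    have hW'int : Integrable W' μ :=
      (integrable_const (|C| : ℝ)).mono' hW'meas (Eventually.of_forall hC')
    have hWW' : Integrable (fun ω => W ω * W' ω) μ :=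
      (hWint.bdd_mul hW'meas (Eventually.of_forall hC')).congr
        (Eventually.of_forall fun ω => mul_comm _ _)
    have hFW' : ∀ n, Integrable (fun ω => (μ[W | ℱ n]) ω * W' ω) μ := fun n =>
      (integrable_condExp.bdd_mul hW'meas (Eventually.of_forall hC')).congr
        (Eventually.of_forall fun ω => mul_comm _ _)
    have hGW' : ∀ n, Integrable (fun ω => (W ω - (μ[W | ℱ n]) ω) * W' ω) μ := fun n =>
      ((hWint.sub integrable_condExp).bdd_mul hW'meas (Eventually.of_forall hC')).congr
        (Eventually.of_forall fun ω => mul_comm _ _)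
    have hid : ∀ n, (fun ω => (μ[(fun ω' => W ω' * W' ω') | ℱ n]) ω
        - (μ[W | ℱ n]) ω * (μ[W' | ℱ n]) ω)
        =ᵐ[μ] μ[(fun ω => (W ω - (μ[W | ℱ n]) ω) * W' ω) | ℱ n] := by
      intro n
      have h1 : μ[(fun ω => (W ω - (μ[W | ℱ n]) ω) * W' ω) | ℱ n]
          =ᵐ[μ] μ[(fun ω' => W ω' * W' ω') | ℱ n] - μ[(fun ω => (μ[W | ℱ n]) ω * W' ω) | ℱ n] := by
        have he : (fun ω => (W ω - (μ[W | ℱ n]) ω) * W' ω)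
            = (fun ω' => W ω' * W' ω') - fun ω => (μ[W | ℱ n]) ω * W' ω := by
          funext ω; simp [sub_mul]
        rw [he]
        exact condExp_sub hWW' (hFW' n) (ℱ n)
      have h2 : μ[(fun ω => (μ[W | ℱ n]) ω * W' ω) | ℱ n]
          =ᵐ[μ] fun ω => (μ[W | ℱ n]) ω * (μ[W' | ℱ n]) ω := by
        exact condExp_mul_of_stronglyMeasurable_left (m := ℱ n) (μ := μ) (f := μ[W | ℱ n]) (g := W')
          stronglyMeasurable_condExp (hFW' n) hW'int
      filter_upwards [h1, h2] with ω hω1 hω2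
      rw [hω1]
      simp only [Pi.sub_apply]
      rw [hω2]
  -- now the integral bound and squeeze
    have hb : ∀ n, ∫ ω, |(μ[(fun ω' => W ω' * W' ω') | ℱ n]) ω
        - (μ[W | ℱ n]) ω * (μ[W' | ℱ n]) ω| ∂μ
        ≤ |C| * ∫ ω, |W ω - (μ[W | ℱ n]) ω| ∂μ := by
      intro n
      have he : ∫ ω, |(μ[(fun ω' => W ω' * W' ω') | ℱ n]) ω
          - (μ[W | ℱ n]) ω * (μ[W' | ℱ n]) ω| ∂μ
          = ∫ ω, |(μ[(fun ω => (W ω - (μ[W | ℱ n]) ω) * W' ω) | ℱ n]) ω| ∂μ := by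
        refine integral_congr_ae ?_
        filter_upwards [hid n] with ω hω
        rw [hω]
      rw [he]
      calc ∫ ω, |(μ[(fun ω => (W ω - (μ[W | ℱ n]) ω) * W' ω) | ℱ n]) ω| ∂μ
          ≤ ∫ ω, |(W ω - (μ[W | ℱ n]) ω) * W' ω| ∂μ := integral_abs_condExp_le _
        _ ≤ ∫ ω, |C| * |W ω - (μ[W | ℱ n]) ω| ∂μ := by
            refine integral_mono (hGW' n).abs
              (((hWint.sub integrable_condExp).abs.const_mul _)) fun ω => ?_
            rw [abs_mul]
            exact mul_le_mul_of_nonneg_left (hC' ω) (abs_nonneg _) |>.trans_eq (mul_comm _ _)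
        _ = |C| * ∫ ω, |W ω - (μ[W | ℱ n]) ω| ∂μ := integral_const_mul _ _
    have hconv : Tendsto (fun n => |C| * ∫ ω, |W ω - (μ[W | ℱ n]) ω| ∂μ) atTop (nhds 0) := by
      simpa using hg1.const_mul |C|
    exact squeeze_zero (fun n => integral_nonneg fun ω => abs_nonneg _) hb hconv
  · -- second part
    have hid2 : ∀ n, (fun ω => (μ[(fun ω' => (W ω') ^ 2) | ℱ n]) ω - ((μ[W | ℱ n]) ω) ^ 2)
        =ᵐ[μ] μ[(fun ω' => (W ω' - (μ[W | ℱ n]) ω') ^ 2) | ℱ n] := by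
      intro n
      have hprod : Integrable (fun ω => (μ[W | ℱ n]) ω * (2 * W ω - (μ[W | ℱ n]) ω)) μ := by
        refine aux_int_mul (hFm n) ?_
        have h2W : MemLp (fun ω => 2 * W ω) 2 μ := hW.const_mul 2
        exact (h2W.sub (hFm n)).ae_eq (Eventually.of_forall fun ω => rfl)
      have h1 : μ[(fun ω' => (W ω') ^ 2) | ℱ n]
          =ᵐ[μ] μ[(fun ω' => (W ω' - (μ[W | ℱ n]) ω') ^ 2) | ℱ n]
            + μ[(fun ω => (μ[W | ℱ n]) ω * (2 * W ω - (μ[W | ℱ n]) ω)) | ℱ n] := by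
        have he : (fun ω' => (W ω') ^ 2)
            = (fun ω' => (W ω' - (μ[W | ℱ n]) ω') ^ 2)
              + fun ω => (μ[W | ℱ n]) ω * (2 * W ω - (μ[W | ℱ n]) ω) := by
          funext ω; simp only [Pi.add_apply]; ring
        rw [he]
        exact condExp_add (hGsq n) hprod (ℱ n)
      have h2 : μ[(fun ω => (μ[W | ℱ n]) ω * (2 * W ω - (μ[W | ℱ n]) ω)) | ℱ n]
          =ᵐ[μ] fun ω => (μ[W | ℱ n]) ω * (μ[(fun ω => 2 * W ω - (μ[W | ℱ n]) ω) | ℱ n]) ω := by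
        exact condExp_mul_of_stronglyMeasurable_left (m := ℱ n) (μ := μ) (f := μ[W | ℱ n])
          (g := fun ω => 2 * W ω - (μ[W | ℱ n]) ω) stronglyMeasurable_condExp hprod
          (((hW.const_mul 2).integrable one_le_two).sub integrable_condExp)
      have h3 : μ[(fun ω => 2 * W ω - (μ[W | ℱ n]) ω) | ℱ n] =ᵐ[μ] μ[W | ℱ n] := by
        have hsub : μ[(fun ω => 2 * W ω - (μ[W | ℱ n]) ω) | ℱ n]
            =ᵐ[μ] μ[(fun ω => 2 * W ω) | ℱ n] - μ[μ[W | ℱ n] | ℱ n] := by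
          have he : (fun ω => 2 * W ω - (μ[W | ℱ n]) ω)
              = (fun ω => 2 * W ω) - μ[W | ℱ n] := by funext ω; rfl
          rw [he]
          exact condExp_sub ((hW.const_mul 2).integrable one_le_two) integrable_condExp (ℱ n)
        have hsm : μ[(fun ω => 2 * W ω) | ℱ n] =ᵐ[μ] fun ω => 2 * (μ[W | ℱ n]) ω := by
          have he : (fun ω => 2 * W ω) = (2 : ℝ) • W := by
            funext ω; simp [smul_eq_mul]
          rw [he]
          filter_upwards [condExp_smul (m := ℱ n) (μ := μ) (2 : ℝ) W] with ω hω
          rw [hω]; simp [smul_eq_mul]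
        have hcc : μ[μ[W | ℱ n] | ℱ n] = μ[W | ℱ n] :=
          condExp_of_stronglyMeasurable (ℱ.le n) stronglyMeasurable_condExp integrable_condExp
        filter_upwards [hsub, hsm] with ω hω1 hω2
        rw [hω1]
        simp only [Pi.sub_apply]
        rw [hω2, hcc]
        ring
      filter_upwards [h1, h2, h3] with ω hω1 hω2 hω3
      rw [hω1]
      simp only [Pi.add_apply]
      rw [hω2, hω3]
      ring
    refine hv.congr fun n => ?_
    refine (integral_congr_ae ?_).symm
    have hnn : 0 ≤ᵐ[μ] μ[(fun ω' => (W ω' - (μ[W | ℱ n]) ω') ^ 2) | ℱ n] :=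
      condExp_nonneg (Eventually.of_forall fun ω => sq_nonneg _)
    filter_upwards [hid2 n, hnn] with ω h1 h2
    rw [h1, abs_of_nonneg h2]
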